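/- Let f be convex on W = conv(S) with curvature at most M, let w* minimize f over W, and suppose w_{k+1} = (1-η_k)w_k + η_k d_k where d_k ∈ S satisfies ⟨∇f(w_k), d_k⟩ ≤ min_{d∈S} ⟨∇f(w_k), d⟩ + ε_k. Then f(w_{k+1}) - f(w*) ≤ (1-η_k)(f(w_k) - f(w*)) + η_k ε_k + (M/2)η_k². -/

import Mathlib

open RealInnerProductSpace

-- gradient inequality for convex functions
lemma grad_ineq {E : Type*} [NormedAddCommGroup E] [InnerProductSpace ℝ E] [CompleteSpace E]
    {W : Set E} {f : E → ℝ} {G x y : E} (hf : ConvexOn ℝ W f)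
    (hx : x ∈ W) (hy : y ∈ W) (hG : HasGradientAt f G x) :
    ⟪G, y - x⟫ ≤ f y - f x := by
  set v := y - x with hv
  have hline : ∀ t : ℝ, t ∈ Set.Icc (0:ℝ) 1 → x + t • v ∈ W := by
    intro t ht
    have : x + t • v = (1 - t) • x + t • y := by
      simp [hv, smul_sub, sub_smul]; abel
    rw [this]
    exact hf.1 hx hy (by linarith [ht.2]) ht.1 (by ring)
  have hd : HasDerivAt (fun t : ℝ => f (x + t • v)) ⟪G, v⟫ 0 := by
    have h1 : HasDerivAt (fun t : ℝ => x + t • v) v 0 := by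
      simpa using ((hasDerivAt_id (0:ℝ)).smul_const v).const_add x
    have h3 : HasFDerivAt f ((InnerProductSpace.toDual ℝ E) G) (x + (0:ℝ) • v) := by
      simpa using hG.hasFDerivAt
    have := h3.comp_hasDerivAt 0 h1
    exact this
  have hslope : ∀ t : ℝ, t ∈ Set.Ioc (0:ℝ) 1 →
      (f (x + t • v) - f x) / t ≤ f y - f x := by
    intro t ht
    have hmem : x + t • v = (1 - t) • x + t • y := by
      simp [hv, smul_sub, sub_smul]; abel
    have := hf.2 hx hy (show (0:ℝ) ≤ 1 - t by linarith [ht.2]) ht.1.le (by ring)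
    rw [hmem]
    rw [div_le_iff₀ ht.1]
    simp only [smul_eq_mul] at this
    nlinarith [this]
  have htend : Filter.Tendsto (fun t : ℝ => (f (x + t • v) - f x) / t)
      (nhdsWithin 0 (Set.Ioi 0)) (nhds ⟪G, v⟫) := by
    have := hasDerivAt_iff_tendsto_slope.mp hd
    have h2 := this.mono_left (nhdsWithin_mono _ (by intro t ht; exact ne_of_gt ht : Set.Ioi (0:ℝ) ⊆ {0}ᶜ))
    refine h2.congr (fun t => ?_)
    simp [slope_def_field, slope, vsub_eq_sub, div_eq_inv_mul]
  have hle : ⟪G, v⟫ ≤ f y - f x := by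
    refine le_of_tendsto htend ?_
    filter_upwards [Ioc_mem_nhdsGT_of_mem (Set.left_mem_Ico.mpr one_pos)] with t ht
    exact hslope t ht
  simpa [hv] using hle

theorem stmt_7 (n : ℕ) (M : ℝ) (S : Set (EuclideanSpace ℝ (Fin n))) (hS : IsCompact S)
    (W : Set (EuclideanSpace ℝ (Fin n))) (hW : W = convexHull ℝ S)
    (f : EuclideanSpace ℝ (Fin n) → ℝ) (g : EuclideanSpace ℝ (Fin n) → EuclideanSpace ℝ (Fin n))
    (hf : ConvexOn ℝ W f)
    (hg : ∀ x ∈ W, HasGradientAt f (g x) x)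
    (hcurv : ∀ w ∈ W, ∀ d ∈ S, ∀ η ∈ Set.Icc (0 : ℝ) 1,
      f ((1 - η) • w + η • d) ≤ f w + η * ⟪g w, d - w⟫ + (M / 2) * η ^ 2)
    (wstar : EuclideanSpace ℝ (Fin n)) (hws : wstar ∈ W) (hmin : ∀ x ∈ W, f wstar ≤ f x)
    (ηk εk : ℝ) (hηk : ηk ∈ Set.Icc (0 : ℝ) 1) (hεk : 0 ≤ εk)
    (wk dk : EuclideanSpace ℝ (Fin n)) (hwk : wk ∈ W) (hdk : dk ∈ S)
    (happrox : ∀ d ∈ S, ⟪g wk, dk⟫ ≤ ⟪g wk, d⟫ + εk) :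
    f ((1 - ηk) • wk + ηk • dk) - f wstar
      ≤ (1 - ηk) * (f wk - f wstar) + ηk * εk + (M / 2) * ηk ^ 2 := by
  -- Step 1: wstar is in the halfspace
  have hstar : ⟪g wk, dk⟫ ≤ ⟪g wk, wstar⟫ + εk := by
    have hconv : Convex ℝ {x : EuclideanSpace ℝ (Fin n) | ⟪g wk, dk⟫ - εk ≤ ⟪g wk, x⟫} := by
      exact convex_halfSpace_ge ⟨fun a b => inner_add_right _ _ _,
        fun c a => real_inner_smul_right _ _ _⟩ _
    have hsub : S ⊆ {x | ⟪g wk, dk⟫ - εk ≤ ⟪g wk, x⟫} := fun d hd => by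
      have := happrox d hd; simp only [Set.mem_setOf_eq]; linarith
    have := convexHull_min hsub hconv
    have hm : wstar ∈ {x | ⟪g wk, dk⟫ - εk ≤ ⟪g wk, x⟫} := this (hW ▸ hws)
    simpa [sub_le_iff_le_add] using hm
  have hgrad : ⟪g wk, wstar - wk⟫ ≤ f wstar - f wk :=
    grad_ineq hf hwk hws (hg wk hwk)
  have hinner : ⟪g wk, dk - wk⟫ ≤ (f wstar - f wk) + εk := by
    have : ⟪g wk, dk - wk⟫ = ⟪g wk, dk⟫ - ⟪g wk, wk⟫ := inner_sub_right _ _ _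
    have h2 : ⟪g wk, wstar - wk⟫ = ⟪g wk, wstar⟫ - ⟪g wk, wk⟫ := inner_sub_right _ _ _
    linarith
  have hc := hcurv wk hwk dk hdk ηk hηk
  have hη0 := hηk.1
  nlinarith [hc, hinner, mul_le_mul_of_nonneg_left hinner hη0]
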